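/- arXiv:1203.0973 — 2 statements merged into one kernel-verified Lean document; each statement's English description precedes it below -/
import Mathlib

section
/- Let q, n ≥ 1 be integers and let X be a nonempty compact topological space. For i = 1,…,n let (ξ_{i,x})_{x∈X} be a family of characters of the lattice Λ = ℤ^q (group homomorphisms Λ → ℂ*) such that for each basis vector e_j the map x ↦ ξ_{i,x}(e_j) is continuous on X and satisfies |ξ_{i,x}(e_j)| ≤ 1 for all x ∈ X and all j. Let (f_x)_{x∈X} be a family of functions Λ → ℂ such that for each λ ∈ Λ the map x ↦ f_x(λ) is continuous on X, and such that for all x ∈ X and all λ ∈ Λ the composed operator identity (ρ(λ) − ξ_{1,x}(λ))⋯(ρ(λ) − ξ_{n,x}(λ)) f_x = 0 holds, i.e. for every μ ∈ Λ one has Σ_{S ⊆ {1,…,n}} (−1)^{|S|} (∏_{i∈S} ξ_{i,x}(λ)) · f_x(μ + (n − |S|)·λ) = 0. Then there exist a constant C > 0 and d ∈ ℕ such that |f_x(λ)| ≤ C (1 + |λ|)^d for all x ∈ X and all λ ∈ Λ⁺. -/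
open scoped BigOperators

open Finset

lemma aux_rec {ι : Type*} [DecidableEq ι] (a : ι → ℂ) (ha : ∀ i, ‖a i‖ ≤ 1)
    (s : Finset ι) :
    ∀ (u : ℕ → ℂ),
      (∀ k, ∑ S ∈ s.powerset, (-1:ℂ)^S.card * (∏ i ∈ S, a i) * u (k + (s.card - S.card)) = 0) →
      ∀ (B : ℝ), 0 ≤ B → (∀ j < s.card, ‖u j‖ ≤ B) →
      ∀ k : ℕ, ‖u k‖ ≤ 2 ^ s.card * (1 + (k:ℝ)) ^ s.card * B := by
  induction s using Finset.induction with
  | empty =>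
      intro u hrec B hB0 _ k
      have h := hrec k
      simp at h
      simp [h, hB0]
  | @insert j t hj ih =>
      intro u hrec B hB0 hB k
      set c := t.card with hc
      have hcard : (insert j t).card = c + 1 := Finset.card_insert_of_notMem hj
      set v : ℕ → ℂ := fun m => u (m+1) - a j * u m with hv
      have hvrec : ∀ m, ∑ S ∈ t.powerset,
          (-1:ℂ)^S.card * (∏ i ∈ S, a i) * v (m + (c - S.card)) = 0 := by
        intro m
        have h := hrec m
        rw [Finset.sum_powerset_insert hj] at h
        rw [← h, hcard]
        rw [← Finset.sum_add_distrib]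
        apply Finset.sum_congr rfl
        intro S hS
        have hScard : S.card ≤ c := by
          rw [hc]; exact Finset.card_le_card (Finset.mem_powerset.mp hS)
        have hjS : j ∉ S := fun hmem => hj (Finset.mem_powerset.mp hS hmem)
        rw [Finset.card_insert_of_notMem hjS, Finset.prod_insert hjS]
        have e1 : m + (c + 1 - S.card) = m + (c - S.card) + 1 := by omega
        have e2 : m + (c + 1 - (S.card + 1)) = m + (c - S.card) := by omega
        rw [e1, e2]
        simp only [hv]
        ring
      have hvB : ∀ i < c, ‖v i‖ ≤ 2 * B := by
        intro i hi
        have h1 : ‖u (i+1)‖ ≤ B := hB (i+1) (by omega)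
        have h2 : ‖u i‖ ≤ B := hB i (by omega)
        calc ‖v i‖ ≤ ‖u (i+1)‖ + ‖a j * u i‖ := by
              simpa [hv, sub_eq_add_neg] using norm_add_le (u (i+1)) (-(a j * u i))
          _ ≤ B + 1 * B := by
              gcongr
              rw [norm_mul]
              exact mul_le_mul (ha j) h2 (norm_nonneg _) zero_le_one
          _ = 2 * B := by ring
      have hvbound : ∀ m : ℕ, ‖v m‖ ≤ 2 ^ c * (1 + (m:ℝ)) ^ c * (2*B) :=
        ih v hvrec (2*B) (by linarith) hvB
      -- step bound
      have hstep : ∀ m : ℕ, ‖u m‖ ≤ B + ∑ i ∈ Finset.range m, ‖v i‖ := by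
        intro m
        induction m with
        | zero => simpa using hB 0 (by omega)
        | succ m ihm =>
            have : u (m+1) = v m + a j * u m := by simp [hv]
            rw [this, Finset.sum_range_succ]
            calc ‖v m + a j * u m‖
                ≤ ‖v m‖ + ‖a j * u m‖ := norm_add_le _ _
              _ ≤ ‖v m‖ + ‖u m‖ := by
                  rw [norm_mul]
                  nlinarith [ha j, norm_nonneg (u m), norm_nonneg (a j)]
              _ ≤ B + ∑ i ∈ Finset.range m, ‖v i‖ + ‖v m‖ := by
                  linarith
              _ = B + (∑ i ∈ Finset.range m, ‖v i‖ + ‖v m‖) := by ring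
      have hsum : ∑ i ∈ Finset.range k, ‖v i‖ ≤
          (k:ℝ) * (2 ^ (c+1) * (1 + (k:ℝ)) ^ c * B) := by
        calc ∑ i ∈ Finset.range k, ‖v i‖
            ≤ ∑ _i ∈ Finset.range k, (2 ^ (c+1) * (1 + (k:ℝ)) ^ c * B) := by
              apply Finset.sum_le_sum
              intro i hi
              have hik : (i:ℝ) ≤ (k:ℝ) := by
                exact_mod_cast le_of_lt (Finset.mem_range.mp hi)
              calc ‖v i‖ ≤ 2 ^ c * (1 + (i:ℝ)) ^ c * (2*B) := hvbound i
                _ ≤ 2 ^ c * (1 + (k:ℝ)) ^ c * (2*B) := by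
                    gcongr <;> linarith
                _ = 2 ^ (c+1) * (1 + (k:ℝ)) ^ c * B := by ring
          _ = (k:ℝ) * (2 ^ (c+1) * (1 + (k:ℝ)) ^ c * B) := by
              rw [Finset.sum_const, Finset.card_range, nsmul_eq_mul]
      rw [hcard]
      have hA : (1:ℝ) ≤ 2 ^ (c+1) * (1 + (k:ℝ)) ^ c := by
        have h1 : (1:ℝ) ≤ 2 ^ (c+1) := one_le_pow₀ (by norm_num)
        have h2 : (1:ℝ) ≤ (1 + (k:ℝ)) ^ c := one_le_pow₀ (by linarith [Nat.cast_nonneg (α := ℝ) k])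
        nlinarith
      calc ‖u k‖ ≤ B + ∑ i ∈ Finset.range k, ‖v i‖ := hstep k
        _ ≤ B + (k:ℝ) * (2 ^ (c+1) * (1 + (k:ℝ)) ^ c * B) := by linarith [hsum]
        _ ≤ 2 ^ (c+1) * (1 + (k:ℝ)) ^ (c+1) * B := by
            have : (1 + (k:ℝ)) ^ (c+1) = (1 + (k:ℝ)) ^ c * (1 + (k:ℝ)) := by ring
            rw [this]
            nlinarith [hA, Nat.cast_nonneg (α := ℝ) k]

/-- Lemma 3.9 of Delorme–Harinck: uniform polynomial bound on the positive cone for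
continuous families of functions on a lattice annihilated by a product of shift operators
with character eigenvalues of modulus at most 1. -/
theorem stmt0 (q n : ℕ) (hq : 1 ≤ q) (hn : 1 ≤ n)
    (X : Type*) [TopologicalSpace X] [CompactSpace X] [Nonempty X]
    (ξ : Fin n → X → (Fin q → ℤ) → ℂ)
    (hξ_one : ∀ i x, ξ i x 0 = 1)
    (hξ_mul : ∀ i x (l μ : Fin q → ℤ), ξ i x (l + μ) = ξ i x l * ξ i x μ)
    (hξ_ne : ∀ i x (l : Fin q → ℤ), ξ i x l ≠ 0)
    (hξ_cont : ∀ i (j : Fin q), Continuous (fun x => ξ i x (Pi.single j 1)))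
    (hξ_bd : ∀ i x (j : Fin q), ‖ξ i x (Pi.single j 1)‖ ≤ 1)
    (f : X → (Fin q → ℤ) → ℂ)
    (hf_cont : ∀ l : Fin q → ℤ, Continuous (fun x => f x l))
    (hrec : ∀ x (l μ : Fin q → ℤ),
      ∑ S : Finset (Fin n),
        (-1 : ℂ) ^ S.card * (∏ i ∈ S, ξ i x l) * f x (μ + (n - S.card) • l) = 0) :
    ∃ (C : ℝ) (d : ℕ), 0 < C ∧ ∀ x (l : Fin q → ℤ), (∀ j, 0 ≤ l j) →
      ‖f x l‖ ≤ C * (1 + ∑ j, |(l j : ℝ)|) ^ d := by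
  -- uniform bound for each fixed lattice point, by compactness
  have hbd : ∀ l : Fin q → ℤ, ∃ M : ℝ, ∀ x, ‖f x l‖ ≤ M := by
    intro l
    obtain ⟨x0, -, hx0⟩ := isCompact_univ.exists_isMaxOn Set.univ_nonempty
      ((continuous_norm.comp (hf_cont l)).continuousOn)
    exact ⟨‖f x0 l‖, fun x => hx0 (Set.mem_univ x)⟩
  choose M hM using hbd
  have hMnn : ∀ l, 0 ≤ M l := fun l =>
    le_trans (norm_nonneg _) (hM l (Classical.arbitrary X))
  have key : ∀ m : ℕ, m ≤ q → ∃ C : ℝ, 0 < C ∧ ∀ x (l : Fin q → ℤ), (∀ j, 0 ≤ l j) →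
      (∀ j : Fin q, m ≤ (j:ℕ) → l j < n) →
      ‖f x l‖ ≤ C * (1 + ∑ j, |(l j : ℝ)|) ^ (n * m) := by
    intro m
    induction m with
    | zero =>
        intro _
        set box : Finset (Fin q → ℤ) := Fintype.piFinset (fun _ : Fin q => Finset.Icc (0:ℤ) (n-1))
          with hbox
        refine ⟨1 + ∑ l ∈ box, M l, by
          have := Finset.sum_nonneg (fun l (_ : l ∈ box) => hMnn l); linarith, ?_⟩
        intro x l hl hsm
        have hlbox : l ∈ box := by
          rw [hbox, Fintype.mem_piFinset]
          intro j
          rw [Finset.mem_Icc]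
          exact ⟨hl j, by have := hsm j (Nat.zero_le _); omega⟩
        have h1 : ‖f x l‖ ≤ M l := hM l x
        have h2 : M l ≤ ∑ l' ∈ box, M l' := Finset.single_le_sum (fun i _ => hMnn i) hlbox
        simp only [Nat.mul_zero, pow_zero, mul_one]
        linarith
    | succ m ih =>
        intro hm1
        obtain ⟨C, hC, hCb⟩ := ih (by omega)
        refine ⟨2^n * (1 + (q:ℝ)*n)^(n*m) * C, by positivity, ?_⟩
        intro x l hl hsm
        set j0 : Fin q := ⟨m, by omega⟩ with hj0
        set e : Fin q → ℤ := Pi.single j0 1 with he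
        set l' : Fin q → ℤ := Function.update l j0 0 with hl'
        set u : ℕ → ℂ := fun t => f x (l' + t • e) with hu
        set s : ℝ := ∑ j, |(l j : ℝ)| with hs
        have hsnn : 0 ≤ s := Finset.sum_nonneg (fun j _ => abs_nonneg _)
        -- evaluation of l' + t • e
        have heval : ∀ (t : ℕ) (j : Fin q), (l' + t • e) j = if j = j0 then (t:ℤ) else l j := by
          intro t j
          by_cases hj : j = j0
          · subst hj
            simp [hl', he, Pi.single_eq_same]
          · simp [hl', he, Function.update_of_ne hj, Pi.single_eq_of_ne hj, if_neg hj]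
        -- recurrence for u
        have hurec : ∀ k, ∑ S ∈ (Finset.univ : Finset (Fin n)).powerset,
            (-1:ℂ)^S.card * (∏ i ∈ S, ξ i x e) *
              u (k + ((Finset.univ : Finset (Fin n)).card - S.card)) = 0 := by
          intro k
          have h := hrec x e (l' + k • e)
          rw [Finset.powerset_univ]
          simp only [Finset.card_univ, Fintype.card_fin]
          rw [← h]
          apply Finset.sum_congr rfl
          intro S _
          congr 2
          rw [hu]
          simp only
          rw [add_smul, ← add_assoc]
        -- bound on initial values
        set B : ℝ := C * ((1 + (q:ℝ)*n) * (1 + s)) ^ (n*m) with hB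
        have hBnn : 0 ≤ B := by positivity
        have hinit : ∀ t < (Finset.univ : Finset (Fin n)).card, ‖u t‖ ≤ B := by
          intro t ht
          rw [Finset.card_univ, Fintype.card_fin] at ht
          have hnn : ∀ j, 0 ≤ (l' + t • e) j := by
            intro j
            rw [heval]
            split
            · exact Int.ofNat_nonneg t
            · exact hl j
          have hsm' : ∀ j : Fin q, m ≤ (j:ℕ) → (l' + t • e) j < n := by
            intro j hj
            rw [heval]
            split
            · exact_mod_cast ht
            · next hne =>
                have : (j:ℕ) ≠ m := fun hc => hne (Fin.ext hc)
                exact hsm j (by omega)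
          have hb := hCb x (l' + t • e) hnn hsm'
          have hterm : ∀ j, |(((l' + t • e) j : ℤ) : ℝ)| ≤ |(l j : ℝ)| + n := by
            intro j
            rw [heval]
            split
            · rw [Int.cast_natCast, abs_of_nonneg (Nat.cast_nonneg t)]
              have : (t:ℝ) ≤ n := by exact_mod_cast le_of_lt ht
              have := abs_nonneg ((l j : ℝ))
              linarith
            · have : (0:ℝ) ≤ n := Nat.cast_nonneg n
              linarith [le_refl |(l j : ℝ)|]
          have hsum : (1 + ∑ j, |(((l' + t • e) j : ℤ) : ℝ)|) ≤ (1 + (q:ℝ)*n) * (1 + s) := by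
            have h1 : ∑ j, |(((l' + t • e) j : ℤ) : ℝ)| ≤ ∑ j, (|(l j : ℝ)| + n) :=
              Finset.sum_le_sum (fun j _ => hterm j)
            have h2 : ∑ j : Fin q, (|(l j : ℝ)| + n) = s + q * n := by
              rw [Finset.sum_add_distrib, Finset.sum_const, Finset.card_univ, Fintype.card_fin,
                nsmul_eq_mul, hs]
            have hqn : (0:ℝ) ≤ (q:ℝ) * (n:ℝ) := by positivity
            nlinarith [mul_nonneg hqn hsnn]
          calc ‖u t‖ ≤ C * (1 + ∑ j, |(((l' + t • e) j : ℤ) : ℝ)|) ^ (n*m) := hb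
            _ ≤ C * ((1 + (q:ℝ)*n) * (1 + s)) ^ (n*m) := by
                gcongr
                all_goals first | positivity | exact hsum
            _ = B := rfl
        -- apply 1-D lemma
        have haux := aux_rec (fun i => ξ i x e) (fun i => hξ_bd i x j0) Finset.univ u hurec
          B hBnn hinit
        set k : ℕ := (l j0).toNat with hk
        have hlk : l' + k • e = l := by
          funext j
          rw [heval]
          split
          · next hj => rw [hj, hk, Int.toNat_of_nonneg (hl j0)]
          · rfl
        have hukl : u k = f x l := by rw [hu]; simp only; rw [hlk]
        have hks : (k:ℝ) ≤ s := by
          have h1 : |(l j0 : ℝ)| ≤ s := Finset.single_le_sum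
            (f := fun j => |(l j : ℝ)|) (fun j _ => abs_nonneg _) (Finset.mem_univ j0)
          have h2 : ((k:ℕ):ℝ) = |(l j0 : ℝ)| := by
            rw [hk]
            rw [abs_of_nonneg (by exact_mod_cast hl j0)]
            exact_mod_cast congrArg (fun z : ℤ => (z:ℝ)) (Int.toNat_of_nonneg (hl j0))
          linarith
        have hfinal := haux k
        rw [hukl, Finset.card_univ, Fintype.card_fin] at hfinal
        calc ‖f x l‖ ≤ 2^n * (1 + (k:ℝ))^n * B := hfinal
          _ ≤ 2^n * (1 + s)^n * (C * ((1 + (q:ℝ)*n) * (1 + s)) ^ (n*m)) := by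
              rw [hB]
              gcongr
              all_goals first | exact hks | linarith
          _ = 2^n * (1 + (q:ℝ)*n)^(n*m) * C * (1 + s) ^ (n*(m+1)) := by
              rw [mul_pow, Nat.mul_add, Nat.mul_one, pow_add]
              ring
  obtain ⟨C, hC, hCb⟩ := key q le_rfl
  refine ⟨C, n * q, hC, ?_⟩
  intro x l hl
  exact hCb x l hl (fun j hj => absurd j.isLt (by omega))
end

section
/- Let E be a nonzero finite-dimensional normed complex vector space and let A_1,…,A_q : E → E be pairwise commuting linear endomorphisms such that every eigenvalue of each A_j has modulus at most 1 (the spectrum of each A_j is contained in the closed unit disc). Then there exist a constant C > 0 and d ∈ ℕ such that for all (i_1,…,i_q) ∈ ℕ^q one has ‖A_1^{i_1} A_2^{i_2} ⋯ A_q^{i_q}‖ ≤ C·(1 + i_1)^d (1 + i_2)^d ⋯ (1 + i_q)^d, where ‖·‖ denotes the operator norm. -/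
open scoped BigOperators
open Polynomial

lemma aux_root_mem_spectrum {B : Type*} [Ring B] [Algebra ℂ B] (a : B)
    (ha : IsIntegral ℂ a) {μ : ℂ} (hroot : (minpoly ℂ a).IsRoot μ) :
    μ ∈ spectrum ℂ a := by
  by_contra h
  rw [spectrum.notMem_iff] at h
  obtain ⟨g, hg⟩ := dvd_iff_isRoot.mpr hroot
  have hmne : minpoly ℂ a ≠ 0 := minpoly.ne_zero ha
  have hgne : g ≠ 0 := by rintro rfl; rw [mul_zero] at hg; exact hmne hg
  have haev : (a - algebraMap ℂ B μ) * aeval a g = 0 := by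
    have h1 := minpoly.aeval ℂ a
    rw [hg, map_mul] at h1
    simpa using h1
  have haev2 : (algebraMap ℂ B μ - a) * aeval a g = 0 := by
    rw [← neg_sub a, neg_mul, haev, neg_zero]
  have hg0 : aeval a g = 0 := by
    obtain ⟨u, hu⟩ := h
    have : (u : B) * aeval a g = 0 := by rw [hu]; exact haev2
    calc aeval a g = ↑u⁻¹ * (↑u * aeval a g) := by rw [← mul_assoc, u.inv_mul, one_mul]
      _ = 0 := by rw [this, mul_zero]
  have hdeg := minpoly.degree_le_of_ne_zero ℂ a hgne hg0
  rw [hg, degree_mul, degree_X_sub_C, Polynomial.degree_eq_natDegree hgne] at hdeg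
  norm_cast at hdeg
  omega

lemma aux_growth {𝔸 : Type*} [NormedRing 𝔸] [NormedAlgebra ℂ 𝔸]
    (l : List ℂ) (a : 𝔸) :
    ∀ x : 𝔸, (∀ z ∈ l, ‖z‖ ≤ 1) → Commute a x →
    (l.map (fun z => a - algebraMap ℂ 𝔸 z)).prod * x = 0 →
    ∃ C : ℝ, 0 < C ∧ ∀ n : ℕ, ‖a ^ n * x‖ ≤ C * (1 + n) ^ l.length := by
  induction l with
  | nil =>
    intro x _ _ h0
    simp only [List.map_nil, List.prod_nil, one_mul] at h0
    exact ⟨1, one_pos, by simp [h0]⟩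
  | cons z t ih =>
    intro x hs hax h0
    have hz1 : ‖z‖ ≤ 1 := hs z (List.mem_cons_self (a := z) (l := t))
    have hcom : ∀ y ∈ t.map (fun z => a - algebraMap ℂ 𝔸 z),
        Commute (a - algebraMap ℂ 𝔸 z) y := by
      intro y hy
      obtain ⟨w, _, rfl⟩ := List.mem_map.mp hy
      exact (((Commute.refl a).sub_right (Algebra.commute_algebraMap_right w a)).sub_left
        ((Algebra.commute_algebraMap_left z a).sub_right (Algebra.commute_algebraMap_left z _)))
    have h0' : (t.map (fun z => a - algebraMap ℂ 𝔸 z)).prod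
        * ((a - algebraMap ℂ 𝔸 z) * x) = 0 := by
      rw [List.map_cons, List.prod_cons] at h0
      calc (t.map (fun z => a - algebraMap ℂ 𝔸 z)).prod * ((a - algebraMap ℂ 𝔸 z) * x)
          = ((t.map (fun z => a - algebraMap ℂ 𝔸 z)).prod * (a - algebraMap ℂ 𝔸 z)) * x :=
            (mul_assoc _ _ _).symm
        _ = ((a - algebraMap ℂ 𝔸 z) * (t.map (fun z => a - algebraMap ℂ 𝔸 z)).prod) * x := by
            rw [(Commute.list_prod_right _ _ hcom).eq]
        _ = 0 := h0
    obtain ⟨C, hC, hb⟩ := ih ((a - algebraMap ℂ 𝔸 z) * x)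
      (fun w hw => hs w (List.mem_cons_of_mem z hw))
      (((Commute.refl a).sub_right (Algebra.commute_algebraMap_right z a)).mul_right hax)
      h0'
    set m := t.length with hm
    refine ⟨‖x‖ + C, by positivity, ?_⟩
    have key : ∀ n : ℕ, ‖a ^ n * x‖ ≤ ‖x‖ + C * n * (1 + n) ^ m := by
      intro n
      induction n with
      | zero => simp
      | succ n ihn =>
        have hstep : a ^ (n + 1) * x = z • (a ^ n * x) + a ^ n * ((a - algebraMap ℂ 𝔸 z) * x) := by
          have e1 : a ^ (n+1) * x = a ^ n * (a * x) := by rw [pow_succ, mul_assoc]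
          have e2 : (algebraMap ℂ 𝔸 z) * x = z • x := (Algebra.smul_def z x).symm
          rw [e1, sub_mul, mul_sub, e2, mul_smul_comm]
          abel
        rw [hstep]
        have h1 : ‖z • (a ^ n * x)‖ ≤ ‖a ^ n * x‖ := by
          rw [norm_smul]
          nlinarith [norm_nonneg (a ^ n * x)]
        have h2 := hb n
        have h3 : ((1:ℝ) + n) ^ m ≤ (1 + ((n:ℝ)+1)) ^ m := by
          apply pow_le_pow_left₀ (by positivity)
          linarith
        have h4 : (0:ℝ) ≤ (1 + (n:ℝ)) ^ m := by positivity
        calc ‖z • (a ^ n * x) + a ^ n * ((a - algebraMap ℂ 𝔸 z) * x)‖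
            ≤ ‖z • (a ^ n * x)‖ + ‖a ^ n * ((a - algebraMap ℂ 𝔸 z) * x)‖ := norm_add_le _ _
          _ ≤ ‖a ^ n * x‖ + C * (1 + n) ^ m := add_le_add h1 h2
          _ ≤ (‖x‖ + C * n * (1 + n) ^ m) + C * (1 + n) ^ m := by linarith
          _ ≤ ‖x‖ + C * ((n:ℕ)+1:ℕ) * (1 + ((n:ℕ)+1:ℕ)) ^ m := by
              push_cast
              have h5 : (C * ((n:ℝ)+1)) * (1+(n:ℝ))^m ≤ (C * ((n:ℝ)+1)) * (1+((n:ℝ)+1))^m :=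
                mul_le_mul_of_nonneg_left h3 (by positivity)
              have hex : (C * ((n:ℝ)+1)) * (1+(n:ℝ))^m
                  = C * (n:ℝ) * (1+(n:ℝ))^m + C*(1+(n:ℝ))^m := by ring
              have hex2 : (C * ((n:ℝ)+1)) * (1+((n:ℝ)+1))^m
                  = C * ((n:ℝ)+1) * (1+((n:ℝ)+1))^m := by ring
              linarith
    intro n
    have hlen : (z :: t).length = m + 1 := by simp [hm]
    rw [hlen]
    have h5 : (1:ℝ) ≤ (1 + n) := by
      have := Nat.cast_nonneg (α := ℝ) n; linarith
    have h6 : (1:ℝ) ≤ (1 + n) ^ m := one_le_pow₀ h5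
    have h7 : (n:ℝ) * (1+n)^m ≤ (1+n)^(m+1) := by
      rw [pow_succ']
      nlinarith [pow_nonneg (by positivity : (0:ℝ) ≤ 1 + (n:ℝ)) m]
    calc ‖a ^ n * x‖ ≤ ‖x‖ + C * n * (1 + n) ^ m := key n
      _ ≤ ‖x‖ * (1+n)^(m+1) + C * (1+n)^(m+1) := by
          have h9 := norm_nonneg x
          have h8 : (1:ℝ) ≤ (1+n)^(m+1) := one_le_pow₀ h5
          nlinarith [hC.le, h7]
      _ = (‖x‖ + C) * (1 + n) ^ (m+1) := by ring

lemma aux_single {E : Type*} [NormedAddCommGroup E] [NormedSpace ℂ E]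
    [FiniteDimensional ℂ E] [Nontrivial E] (a : E →L[ℂ] E)
    (hspec : ∀ z ∈ spectrum ℂ a, ‖z‖ ≤ 1) :
    ∃ (C : ℝ) (d : ℕ), 0 < C ∧ ∀ n : ℕ, ‖a ^ n‖ ≤ C * (1 + n) ^ d := by
  have ha : IsIntegral ℂ a := Algebra.IsIntegral.isIntegral a
  set p := minpoly ℂ a with hp
  have hmonic : p.Monic := minpoly.monic ha
  have hsplit : p.Splits := IsAlgClosed.splits p
  have hfact : p = (p.roots.map fun z => X - C z).prod :=
    hsplit.eq_prod_roots_of_monic hmonic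
  set L := p.roots.toList with hL
  have hLr : (L : Multiset ℂ) = p.roots := Multiset.coe_toList _
  have hfact' : p = ((L.map fun z => X - C z)).prod := by
    rw [hfact, ← hLr]
    simp
  have haev : (L.map (fun z => a - algebraMap ℂ (E →L[ℂ] E) z)).prod * 1 = 0 := by
    rw [mul_one]
    have h1 := minpoly.aeval ℂ a
    rw [← hp, hfact', ← List.prod_hom _ (aeval a : ℂ[X] →ₐ[ℂ] (E →L[ℂ] E)), List.map_map] at h1
    have e : List.map (⇑(aeval a) ∘ fun z => X - C z) L
        = List.map (fun z => a - algebraMap ℂ (E →L[ℂ] E) z) L :=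
      List.map_congr_left fun z _ => by simp
    rw [e] at h1
    exact h1
  have hroots : ∀ z ∈ L, ‖z‖ ≤ 1 := by
    intro z hz
    have : z ∈ p.roots := by rw [← hLr]; exact_mod_cast hz
    exact hspec z (aux_root_mem_spectrum a ha ((mem_roots hmonic.ne_zero).mp this))
  obtain ⟨Cc, hC, hb⟩ := aux_growth L a 1 hroots (Commute.one_right a) haev
  exact ⟨Cc, L.length, hC, fun n => by simpa using hb n⟩

lemma aux_norm_noncommProd {𝔸 : Type*} [NormedRing 𝔸] [NormOneClass 𝔸]
    {ι : Type*} (s : Finset ι) (f : ι → 𝔸)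
    (comm : (s : Set ι).Pairwise (Function.onFun Commute f)) :
    ‖s.noncommProd f comm‖ ≤ ∏ i ∈ s, ‖f i‖ := by
  induction s using Finset.cons_induction with
  | empty => simp
  | cons i s hi ih =>
    rw [Finset.noncommProd_cons, Finset.prod_cons]
    refine (norm_mul_le _ _).trans ?_
    exact mul_le_mul_of_nonneg_left (ih _) (norm_nonneg _)

/-- [DOP] Lemma 8.1, as used in the proof of Lemma 3.9 of Delorme–Harinck: pairwise
commuting endomorphisms of a nonzero finite-dimensional normed complex vector space all
of whose eigenvalues lie in the closed unit disc have mixed powers of at most polynomial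
growth in operator norm. -/
theorem stmt4 (E : Type*) [NormedAddCommGroup E] [NormedSpace ℂ E]
    [FiniteDimensional ℂ E] [Nontrivial E] (q : ℕ) (A : Fin q → E →L[ℂ] E)
    (hcomm : ∀ j j', Commute (A j) (A j'))
    (hspec : ∀ j, ∀ z ∈ spectrum ℂ (A j), ‖z‖ ≤ 1) :
    ∃ (C : ℝ) (d : ℕ), 0 < C ∧ ∀ i : Fin q → ℕ,
      ‖Finset.univ.noncommProd (fun j => A j ^ i j)
          (fun a _ b _ _ => (hcomm a b).pow_pow _ _)‖ ≤
        C * ∏ j, ((1 : ℝ) + i j) ^ d := by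
  choose C d hC hb using fun j => aux_single (A j) (hspec j)
  refine ⟨∏ j, max 1 (C j), Finset.univ.sup d, ?_, ?_⟩
  · exact Finset.prod_pos fun j _ => lt_of_lt_of_le one_pos (le_max_left _ _)
  intro i
  refine (aux_norm_noncommProd _ _ _).trans ?_
  rw [← Finset.prod_mul_distrib]
  apply Finset.prod_le_prod (fun j _ => norm_nonneg _)
  intro j _
  refine (hb j (i j)).trans ?_
  have h1 : (1:ℝ) ≤ 1 + (i j : ℝ) := by
    have := Nat.cast_nonneg (α := ℝ) (i j); linarith
  have h2 : ((1:ℝ) + i j) ^ (d j) ≤ ((1:ℝ) + i j) ^ (Finset.univ.sup d) :=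
    pow_le_pow_right₀ h1 (Finset.le_sup (Finset.mem_univ j))
  have h3 : C j ≤ max 1 (C j) := le_max_right _ _
  have h4 : (0:ℝ) ≤ ((1:ℝ) + i j) ^ (d j) := by positivity
  nlinarith [le_max_left (1:ℝ) (C j), h2, h4, (hC j).le]
end
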